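/- Let G_A = (A, E_A) be a finite agent graph, H houses, P_a preferences, and φ an injective allocation. Suppose agents a₁, a₂ ∈ A have identical preference sets (P_{a₁} = P_{a₂}) and identical neighborhoods outside themselves (N(a₁) \ {a₂} = N(a₂) \ {a₁}). Let φ' be obtained from φ by swapping the houses of a₁ and a₂. Then the number of envious agents under φ' equals the number of envious agents under φ. -/

import Mathlib

open scoped Classical in
theorem stmt17 {A H : Type*} [Fintype A] [DecidableEq A]
    (G : SimpleGraph A) (P : A → Set H)
    (φ : A → H) (hφ : Function.Injective φ)
    (a₁ a₂ : A)
    (hP : P a₁ = P a₂)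
    (hN : G.neighborSet a₁ \ {a₂} = G.neighborSet a₂ \ {a₁}) :
    (Finset.univ.filter (fun a : A =>
        (φ ∘ Equiv.swap a₁ a₂) a ∉ P a ∧
          ∃ a', G.Adj a a' ∧ (φ ∘ Equiv.swap a₁ a₂) a' ∈ P a)).card
      = (Finset.univ.filter (fun a : A =>
          φ a ∉ P a ∧ ∃ a', G.Adj a a' ∧ φ a' ∈ P a)).card := by
  set σ := Equiv.swap a₁ a₂ with hσ
  have hPσ : ∀ a, P (σ a) = P a := by
    intro a
    rcases eq_or_ne a a₁ with rfl | h1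
    · simp [hσ, Equiv.swap_apply_left, hP]
    rcases eq_or_ne a a₂ with rfl | h2
    · simp [hσ, Equiv.swap_apply_right, hP]
    · simp [hσ, Equiv.swap_apply_of_ne_of_ne h1 h2]
  have key : ∀ x, x ≠ a₁ → x ≠ a₂ → (G.Adj a₁ x ↔ G.Adj a₂ x) := by
    intro x h1 h2
    have := Set.ext_iff.mp hN x
    simpa [SimpleGraph.mem_neighborSet, h1, h2] using this
  have hadj : ∀ a b, G.Adj a b → G.Adj (σ a) (σ b) := by
    intro a b hab
    rcases eq_or_ne a a₁ with ha1 | ha1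
    · rcases eq_or_ne b a₂ with hb2 | hb2
      · rw [hσ, ha1, hb2, Equiv.swap_apply_left, Equiv.swap_apply_right]
        rw [ha1, hb2] at hab; exact hab.symm
      · have hb1 : b ≠ a₁ := fun h => (G.loopless.irrefl a (by rw [h, ← ha1] at hab; exact hab)).elim
        rw [hσ, ha1, Equiv.swap_apply_left, Equiv.swap_apply_of_ne_of_ne hb1 hb2]
        exact (key b hb1 hb2).mp (ha1 ▸ hab)
    rcases eq_or_ne a a₂ with ha2 | ha2
    · rcases eq_or_ne b a₁ with hb1 | hb1
      · rw [hσ, ha2, hb1, Equiv.swap_apply_right, Equiv.swap_apply_left]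
        rw [ha2, hb1] at hab; exact hab.symm
      · have hb2 : b ≠ a₂ := fun h => (G.loopless.irrefl a (by rw [h, ← ha2] at hab; exact hab)).elim
        rw [hσ, ha2, Equiv.swap_apply_right, Equiv.swap_apply_of_ne_of_ne hb1 hb2]
        exact (key b hb1 hb2).mpr (ha2 ▸ hab)
    · rcases eq_or_ne b a₁ with hb1 | hb1
      · rw [hσ, hb1, Equiv.swap_apply_of_ne_of_ne ha1 ha2, Equiv.swap_apply_left]
        exact ((key a ha1 ha2).mp (hb1 ▸ hab).symm).symm
      rcases eq_or_ne b a₂ with hb2 | hb2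
      · rw [hσ, hb2, Equiv.swap_apply_of_ne_of_ne ha1 ha2, Equiv.swap_apply_right]
        exact ((key a ha1 ha2).mpr (hb2 ▸ hab).symm).symm
      · rw [hσ, Equiv.swap_apply_of_ne_of_ne ha1 ha2,
          Equiv.swap_apply_of_ne_of_ne hb1 hb2]
        exact hab
  have hσσ : ∀ a, σ (σ a) = a := fun a => Equiv.swap_apply_self a₁ a₂ a
  have hiff : ∀ a, ((φ ∘ σ) a ∉ P a ∧ ∃ a', G.Adj a a' ∧ (φ ∘ σ) a' ∈ P a)
      ↔ (φ (σ a) ∉ P (σ a) ∧ ∃ b, G.Adj (σ a) b ∧ φ b ∈ P (σ a)) := by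
    intro a
    rw [hPσ a]
    constructor
    · rintro ⟨h1, a', hadj', hmem⟩
      exact ⟨h1, σ a', hadj a a' hadj', hmem⟩
    · rintro ⟨h1, b, hadj', hmem⟩
      refine ⟨h1, σ b, ?_, by simpa [hσσ] using hmem⟩
      have := hadj (σ a) b hadj'
      rwa [hσσ] at this
  apply Finset.card_bij' (fun a _ => σ a) (fun a _ => σ a)
  · intro a ha
    simp only [Finset.mem_filter, Finset.mem_univ, true_and] at ha ⊢
    exact (hiff a).mp ha
  · intro a ha
    simp only [Finset.mem_filter, Finset.mem_univ, true_and] at ha ⊢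
    apply (hiff (σ a)).mpr
    simpa [hσσ] using ha
  · intro a _; exact hσσ a
  · intro a _; exact hσσ a
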